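/- Let G be a connected graph with minimum degree δ. If G contains two adjacent vertices each of degree δ, then the generalized 3-connectivity of G satisfies κ₃(G) ≤ δ − 1. -/

import Mathlib

open SimpleGraph

/-- `T` is a pendant `S`-Steiner tree in `G`: a subtree of `G` containing `S` in which
every vertex of `S` has degree exactly one. -/
def IsPendantSteinerTree {V : Type*} (G : SimpleGraph V) (S : Set V) (T : G.Subgraph) : Prop :=
  T.coe.IsTree ∧ S ⊆ T.verts ∧ ∀ v ∈ S, (T.neighborSet v).ncard = 1

/-- Two (pendant) `S`-Steiner trees are internally disjoint: edge-disjoint with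
vertex intersection exactly `S`. -/
def InternallyDisjoint {V : Type*} (G : SimpleGraph V) (S : Set V) (T T' : G.Subgraph) : Prop :=
  T.edgeSet ∩ T'.edgeSet = ∅ ∧ T.verts ∩ T'.verts = S

/-- There exist `ℓ` pairwise internally disjoint pendant `S`-Steiner trees in `G`. -/
def HasPendantTrees {V : Type*} (G : SimpleGraph V) (S : Set V) (ℓ : ℕ) : Prop :=
  ∃ T : Fin ℓ → G.Subgraph, (∀ i, IsPendantSteinerTree G S (T i)) ∧
    ∀ i j, i ≠ j → InternallyDisjoint G S (T i) (T j)

/-- The pendant tree `k`-connectivity `τ_k(G)`: the largest `ℓ` such that every `k`-set of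
vertices admits `ℓ` pairwise internally disjoint pendant Steiner trees. -/
noncomputable def pendantConn {V : Type*} (G : SimpleGraph V) (k : ℕ) : ℕ :=
  sSup {ℓ | ∀ S : Finset V, S.card = k → HasPendantTrees G (↑S) ℓ}

/-- The minimum degree of a graph, via neighbour sets. -/
noncomputable def minDeg {V : Type*} (G : SimpleGraph V) : ℕ :=
  sInf (Set.range fun v => (G.neighborSet v).ncard)

/-- `G` is `k`-connected. -/
def IsKConnected {V : Type*} [Fintype V] (G : SimpleGraph V) (k : ℕ) : Prop :=
  k < Fintype.card V ∧
    ∀ U : Finset V, U.card < k → (G.induce ((↑U : Set V)ᶜ)).Connected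

/-- The vertex connectivity `κ(G)`. -/
noncomputable def vertexConn {V : Type*} [Fintype V] (G : SimpleGraph V) : ℕ :=
  sSup {k | IsKConnected G k}

/-- `T` is an `S`-Steiner tree in `G`. -/
def IsSteinerTree {V : Type*} (G : SimpleGraph V) (S : Set V) (T : G.Subgraph) : Prop :=
  T.coe.IsTree ∧ S ⊆ T.verts

/-- There exist `ℓ` pairwise internally disjoint `S`-Steiner trees in `G`. -/
def HasSteinerTrees {V : Type*} (G : SimpleGraph V) (S : Set V) (ℓ : ℕ) : Prop :=
  ∃ T : Fin ℓ → G.Subgraph, (∀ i, IsSteinerTree G S (T i)) ∧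
    ∀ i j, i ≠ j → InternallyDisjoint G S (T i) (T j)

/-- The generalized `k`-connectivity `κ_k(G)`. -/
noncomputable def genConn {V : Type*} (G : SimpleGraph V) (k : ℕ) : ℕ :=
  sSup {ℓ | ∀ S : Finset V, S.card = k → HasSteinerTrees G (↑S) ℓ}


lemma aux_exists_nbr {V : Type*} {G : SimpleGraph V} (T : G.Subgraph)
    (hT : T.coe.Connected) {a b : V} (ha : a ∈ T.verts) (hb : b ∈ T.verts) (hab : a ≠ b) :
    ∃ x, T.Adj a x := by
  obtain ⟨p⟩ := hT ⟨a, ha⟩ ⟨b, hb⟩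
  have hne : (⟨a, ha⟩ : ↥T.verts) ≠ ⟨b, hb⟩ := by simpa [Subtype.ext_iff] using hab
  have hnn : ¬ p.Nil := SimpleGraph.Walk.not_nil_of_ne hne
  have h2 := SimpleGraph.Walk.adj_snd hnn
  exact ⟨(p.getVert 1).val, by rwa [Subgraph.coe_adj] at h2⟩

lemma aux_trapped {V : Type*} {G : SimpleGraph V} (T : G.Subgraph)
    (hT : T.coe.Connected) {u v w : V} (hu : u ∈ T.verts) (hw : w ∈ T.verts)
    (hwu : w ≠ u) (hwv : w ≠ v)
    (hNu : ∀ x, T.Adj u x → x = v) (hNv : ∀ y, T.Adj v y → y = u) : False := by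
  have key : ∀ (a b : ↥T.verts) (_ : T.coe.Walk a b),
      (a.val = u ∨ a.val = v) → (b.val = u ∨ b.val = v) := by
    intro a b p
    induction p with
    | nil => exact id
    | @cons x y z h q ih =>
      intro hstart
      apply ih
      rw [Subgraph.coe_adj] at h
      rcases hstart with h1 | h1
      · right; exact hNu _ (h1 ▸ h)
      · left; exact hNv _ (h1 ▸ h)
  obtain ⟨p⟩ := hT ⟨u, hu⟩ ⟨w, hw⟩
  rcases key _ _ p (Or.inl rfl) with h | h
  · exact hwu h
  · exact hwv h

lemma aux_count {V : Type*} [Fintype V] {G : SimpleGraph V} {ℓ : ℕ}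
    (T : Fin ℓ → G.Subgraph)
    (hdisj : ∀ i j, i ≠ j → (T i).edgeSet ∩ (T j).edgeSet = ∅)
    {a b : V} (hab : G.Adj a b)
    (h : ∀ i, ∃ x, (T i).Adj a x ∧ x ≠ b) :
    ℓ ≤ (G.neighborSet a).ncard - 1 := by
  choose f hf hfb using h
  have hmaps : ∀ i : Fin ℓ, f i ∈ G.neighborSet a \ {b} := fun i =>
    ⟨(T i).adj_sub (hf i), hfb i⟩
  have hinj : Function.Injective f := by
    intro i j hij
    by_contra hne
    have h1 : s(a, f i) ∈ (T i).edgeSet := Subgraph.mem_edgeSet.2 (hf i)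
    have h2 : s(a, f i) ∈ (T j).edgeSet := Subgraph.mem_edgeSet.2 (hij ▸ hf j)
    have := hdisj i j hne
    exact absurd (Set.mem_inter h1 h2) (by simp [this])
  have hle : (Set.univ : Set (Fin ℓ)).ncard ≤ (G.neighborSet a \ {b}).ncard :=
    Set.ncard_le_ncard_of_injOn f (fun i _ => hmaps i) hinj.injOn (Set.toFinite _)
  rw [Set.ncard_univ, Nat.card_eq_fintype_card, Fintype.card_fin] at hle
  rwa [Set.ncard_diff_singleton_of_mem (show b ∈ G.neighborSet a from hab)] at hle

lemma aux_steiner_bound {V : Type*} [Fintype V] (G : SimpleGraph V) {u v w : V}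
    (huv : G.Adj u v) (hwu : w ≠ u) (hwv : w ≠ v) {ℓ : ℕ}
    (h : HasSteinerTrees G {u, v, w} ℓ) :
    ℓ ≤ (G.neighborSet u).ncard - 1 ∨ ℓ ≤ (G.neighborSet v).ncard - 1 := by
  obtain ⟨T, hT, hdisj⟩ := h
  have hconn : ∀ i, (T i).coe.Connected := fun i => (hT i).1.isConnected
  have hUm : ∀ i, u ∈ (T i).verts := fun i => (hT i).2 (by simp)
  have hVm : ∀ i, v ∈ (T i).verts := fun i => (hT i).2 (by simp)
  have hWm : ∀ i, w ∈ (T i).verts := fun i => (hT i).2 (by simp)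
  have hedisj : ∀ i j, i ≠ j → (T i).edgeSet ∩ (T j).edgeSet = ∅ :=
    fun i j hij => (hdisj i j hij).1
  have key : (∀ i, ∃ x, (T i).Adj u x ∧ x ≠ v) ∨ (∀ i, ∃ y, (T i).Adj v y ∧ y ≠ u) := by
    by_cases hA : ∃ i0, (T i0).Adj u v
    · obtain ⟨i0, hi0⟩ := hA
      have hothers : ∀ i, i ≠ i0 → ¬ (T i).Adj u v := by
        intro i hi hadj
        have h1 : s(u, v) ∈ (T i).edgeSet := Subgraph.mem_edgeSet.2 hadj
        have h2 : s(u, v) ∈ (T i0).edgeSet := Subgraph.mem_edgeSet.2 hi0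
        exact absurd (Set.mem_inter h1 h2) (by simp [hedisj i i0 hi])
      by_cases hx : ∃ x, (T i0).Adj u x ∧ x ≠ v
      · left
        intro i
        by_cases hii : i = i0
        · exact hii ▸ hx
        · obtain ⟨x, hx'⟩ := aux_exists_nbr (T i) (hconn i) (hUm i) (hWm i) (Ne.symm hwu)
          refine ⟨x, hx', fun hxv => hothers i hii (hxv ▸ hx')⟩
      · by_cases hy : ∃ y, (T i0).Adj v y ∧ y ≠ u
        · right
          intro i
          by_cases hii : i = i0
          · exact hii ▸ hy
          · obtain ⟨y, hy'⟩ := aux_exists_nbr (T i) (hconn i) (hVm i) (hWm i) (Ne.symm hwv)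
            refine ⟨y, hy', fun hyu => hothers i hii (hyu ▸ hy').symm⟩
        · exfalso
          push_neg at hx hy
          exact aux_trapped (T i0) (hconn i0) (hUm i0) (hWm i0) hwu hwv hx hy
    · left
      intro i
      obtain ⟨x, hx'⟩ := aux_exists_nbr (T i) (hconn i) (hUm i) (hWm i) (Ne.symm hwu)
      exact ⟨x, hx', fun hxv => hA ⟨i, hxv ▸ hx'⟩⟩
  rcases key with k | k
  · exact Or.inl (aux_count T hedisj huv k)
  · exact Or.inr (aux_count T hedisj huv.symm k)

theorem stmt2 {V : Type*} [Fintype V] (G : SimpleGraph V) (hG : G.Connected)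
    (u v : V) (huv : G.Adj u v)
    (hu : (G.neighborSet u).ncard = minDeg G) (hv : (G.neighborSet v).ncard = minDeg G) :
    genConn G 3 ≤ minDeg G - 1 := by
  classical
  by_cases hcard : 3 ≤ Fintype.card V
  · have hex : ∃ w, w ≠ u ∧ w ≠ v := by
      by_contra hc
      push_neg at hc
      have hsub : (Finset.univ : Finset V) ⊆ {u, v} := by
        intro x _
        rcases eq_or_ne x u with h | h
        · simp [h]
        · simp [hc x h]
      have h1 : Fintype.card V ≤ 2 := by
        calc Fintype.card V = (Finset.univ : Finset V).card := (Finset.card_univ).symm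
        _ ≤ ({u, v} : Finset V).card := Finset.card_le_card hsub
        _ ≤ 2 := Finset.card_insert_le u {v} |>.trans (by simp)
      omega
    obtain ⟨w, hwu, hwv⟩ := hex
    have hScard : ({u, v, w} : Finset V).card = 3 :=
      Finset.card_eq_three.mpr ⟨u, v, w, huv.ne, Ne.symm hwu, Ne.symm hwv, rfl⟩
    apply csSup_le
    · exact ⟨0, fun S' _ => ⟨fun i => i.elim0, fun i => i.elim0, fun i j _ => i.elim0⟩⟩
    · intro ℓ hℓ
      have h := hℓ _ hScard
      have hset : (↑({u, v, w} : Finset V) : Set V) = {u, v, w} := by simp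
      rw [hset] at h
      rcases aux_steiner_bound G huv hwu hwv h with h1 | h1
      · rwa [hu] at h1
      · rwa [hv] at h1
  · have hset : {ℓ | ∀ S : Finset V, S.card = 3 → HasSteinerTrees G (↑S) ℓ} = Set.univ := by
      ext ℓ
      simp only [Set.mem_setOf_eq, Set.mem_univ, iff_true]
      intro S hS
      have : S.card ≤ Fintype.card V := by simpa using Finset.card_le_univ S
      omega
    have hnb : ¬ BddAbove (Set.univ : Set ℕ) := by
      rintro ⟨n, hn⟩
      exact absurd (hn (Set.mem_univ (n + 1))) (by omega)
    rw [genConn, hset, csSup_of_not_bddAbove hnb, csSup_empty]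
    exact Nat.zero_le _
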